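/- Let W ∈ ℝ^{n×n} be invertible, X ∈ ℝ^{n×n} symmetric positive definite, P ∈ ℝ^{n_p×n}, φ > 0 a scalar, and e_i the i-th standard basis vector of ℝ^{n_p}. If the (n+1)×(n+1) symmetric block matrix [[W + Wᵀ − X, φ·Pᵀe_i], [φ·e_iᵀP, φ]] is positive semidefinite, then X⁻¹ − φ·W⁻ᵀ·Pᵀe_i e_iᵀ P·W⁻¹ is positive semidefinite. -/

import Mathlib

open Matrix

theorem dilated_lmi_schur_step (n np : ℕ)
    (W X : Matrix (Fin n) (Fin n) ℝ) (hW : IsUnit W.det) (hX : X.PosDef)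
    (P : Matrix (Fin np) (Fin n) ℝ) (φ : ℝ) (hφ : 0 < φ) (i : Fin np)
    (hLMI : (Matrix.fromBlocks
        (W + Wᵀ - X)
        (Matrix.replicateCol Unit (φ • Pᵀ.mulVec (Pi.single i 1)))
        (Matrix.replicateRow Unit (φ • Matrix.vecMul (Pi.single i 1) P))
        (Matrix.of fun (_ _ : Unit) => φ)).PosSemidef) :
    (X⁻¹ - φ • ((W⁻¹)ᵀ *
        Matrix.vecMulVec (Pᵀ.mulVec (Pi.single i 1)) (Matrix.vecMul (Pi.single i 1) P) *
        W⁻¹)).PosSemidef := by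
  classical
  set v : Fin n → ℝ := Matrix.vecMul (Pi.single i 1) P with hv
  have hv' : Pᵀ.mulVec (Pi.single i 1) = v := Matrix.mulVec_transpose P (Pi.single i 1)
  set K : Matrix (Fin n) (Fin n) ℝ := Matrix.vecMulVec v v with hK
  set D : Matrix Unit Unit ℝ := Matrix.of fun _ _ => φ with hD
  have hDpd : D.PosDef := by
    rw [Matrix.posDef_iff_dotProduct_mulVec]
    constructor
    · ext a b; simp [hD]
    · intro x hx
      have hx0 : x () ≠ 0 := by
        intro h; apply hx; funext a; cases a; exact h
      simp only [hD, Matrix.mulVec, dotProduct, Fintype.sum_unique, Matrix.of_apply,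
        RCLike.star_def, starRingEnd_apply, star_trivial]
      have h2 : 0 < x () * x () := mul_self_pos.mpr hx0
      nlinarith
  haveI : Invertible D := hDpd.isUnit.invertible
  have hrow : Matrix.replicateRow Unit (φ • v) = (Matrix.replicateCol Unit (φ • v))ᴴ := by
    rw [Matrix.conjTranspose_replicateCol]; simp
  rw [hv', hrow] at hLMI
  have h1 : (W + Wᵀ - X - Matrix.replicateCol Unit (φ • v) * D⁻¹ * (Matrix.replicateCol Unit (φ • v))ᴴ).PosSemidef :=
    (Matrix.PosDef.fromBlocks₂₂ _ _ hDpd).mp hLMI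
  have hDinv : D⁻¹ = Matrix.of fun _ _ => φ⁻¹ := by
    apply Matrix.inv_eq_right_inv
    ext a b
    simp [hD, Matrix.mul_apply, Fintype.sum_unique, mul_inv_cancel₀ hφ.ne',
      Matrix.one_apply]
  have hBB : Matrix.replicateCol Unit (φ • v) * D⁻¹ * (Matrix.replicateCol Unit (φ • v))ᴴ = φ • K := by
    rw [hDinv]
    ext a b
    simp [Matrix.mul_apply, Fintype.sum_unique, hK, Matrix.vecMulVec_apply,
      Matrix.replicateCol_apply, Matrix.conjTranspose_apply]
    field_simp
  rw [hBB] at h1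
  have h2 : ((W - X)ᴴ * X⁻¹ * (W - X)).PosSemidef :=
    hX.inv.posSemidef.conjTranspose_mul_mul_same (W - X)
  have hXud : IsUnit X.det := isUnit_iff_ne_zero.mpr hX.det_pos.ne'
  have hXX : X⁻¹ * X = 1 := Matrix.nonsing_inv_mul X hXud
  have hXXr : X * X⁻¹ = 1 := Matrix.mul_nonsing_inv X hXud
  have hXs : Xᵀ = X := (Matrix.conjTranspose_eq_transpose_of_trivial X) ▸ hX.1
  have hXiW : X * (X⁻¹ * W) = W := by rw [← Matrix.mul_assoc, hXXr, Matrix.one_mul]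
  have hM : W + Wᵀ - X - φ • K + (W - X)ᴴ * X⁻¹ * (W - X) = Wᵀ * X⁻¹ * W - φ • K := by
    have hct : (W - X)ᴴ = Wᵀ - X := by
      rw [Matrix.conjTranspose_eq_transpose_of_trivial, Matrix.transpose_sub, hXs]
    rw [hct]
    simp only [Matrix.sub_mul, Matrix.mul_sub, Matrix.mul_assoc, hXX, hXiW, Matrix.mul_one]
    abel
  have h3 : (Wᵀ * X⁻¹ * W - φ • K).PosSemidef := hM ▸ h1.add h2
  have h4 := h3.conjTranspose_mul_mul_same W⁻¹
  have hWct : (W⁻¹)ᴴ = (W⁻¹)ᵀ := Matrix.conjTranspose_eq_transpose_of_trivial _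
  rw [hWct] at h4
  have hWr : W * W⁻¹ = 1 := Matrix.mul_nonsing_inv W hW
  have hWt : (W⁻¹)ᵀ * Wᵀ = 1 := by rw [← Matrix.transpose_mul, hWr, Matrix.transpose_one]
  have hWt2 : (W⁻¹)ᵀ * (Wᵀ * X⁻¹) = X⁻¹ := by rw [← Matrix.mul_assoc, hWt, Matrix.one_mul]
  have key : (W⁻¹)ᵀ * (Wᵀ * X⁻¹ * W - φ • K) * W⁻¹
      = X⁻¹ - φ • ((W⁻¹)ᵀ * K * W⁻¹) := by
    rw [Matrix.mul_sub, Matrix.sub_mul]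
    congr 1
    · simp only [Matrix.mul_assoc, hWr, Matrix.mul_one, hWt2]
    · rw [Matrix.mul_smul, Matrix.smul_mul, Matrix.mul_assoc]
  rw [key] at h4
  rw [hv']
  exact h4
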